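/- (CR sub-Laplacian comparison on H¹.) Let Ω = {(x₁,x₂,t) ∈ ℝ³ : (x₁,x₂) ≠ (0,0), t > 0} and define r : Ω → ℝ by r(x₁,x₂,t) = (φ/sin φ)·√(x₁²+x₂²), where φ ∈ (0,π) is the unique solution of (φ − sin φ cos φ)/sin²φ = t/(x₁²+x₂²). Let X₁ = ∂/∂x₁ + 2x₂ ∂/∂t and X₂ = ∂/∂x₂ − 2x₁ ∂/∂t. Then at every point of Ω, ½(X₁(X₁ r) + X₂(X₂ r)) ≤ 3/r. -/

import Mathlib

open Real

/-- The derivative along `X₁ = ∂/∂x₁ + 2x₂ ∂/∂t` on ℝ³. -/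
noncomputable def heisXd1 (f : ℝ × ℝ × ℝ → ℝ) (p : ℝ × ℝ × ℝ) : ℝ :=
  fderiv ℝ f p (1, 0, 2 * p.2.1)

/-- The derivative along `X₂ = ∂/∂x₂ − 2x₁ ∂/∂t` on ℝ³. -/
noncomputable def heisXd2 (f : ℝ × ℝ × ℝ → ℝ) (p : ℝ × ℝ × ℝ) : ℝ :=
  fderiv ℝ f p (0, 1, -2 * p.1)

/-- The region `Ω = {(x₁,x₂,t) : (x₁,x₂) ≠ (0,0), t > 0}`. -/
def heisOmega : Set (ℝ × ℝ × ℝ) := {p | (p.1, p.2.1) ≠ (0, 0) ∧ 0 < p.2.2}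

private lemma heis_mono_aux {F F' : ℝ → ℝ} (hF : ∀ y, HasDerivAt F (F' y) y)
    (h0 : ∀ y, 0 < y → 0 ≤ F' y) {x : ℝ} (hx : 0 ≤ x) : F 0 ≤ F x := by
  have hmono : MonotoneOn F (Set.Ici 0) := by
    apply monotoneOn_of_deriv_nonneg (convex_Ici 0)
    · exact fun y _ => (hF y).differentiableAt.continuousAt.continuousWithinAt
    · intro y hy
      exact (hF y).differentiableAt.differentiableWithinAt
    · intro y hy
      rw [interior_Ici] at hy
      rw [(hF y).deriv]
      exact h0 y hy
  exact hmono (Set.self_mem_Ici) hx hx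

private lemma heis_sin_lower {x : ℝ} (hx : 0 ≤ x) : x - x ^ 3 / 6 ≤ Real.sin x := by
  have hF : ∀ y : ℝ, HasDerivAt (fun y => Real.sin y - y + y ^ 3 / 6)
      (Real.cos y - 1 + y ^ 2 / 2) y := by
    intro y
    have h1 := ((Real.hasDerivAt_sin y).sub (hasDerivAt_id y)).add ((hasDerivAt_pow 3 y).div_const 6)
    refine h1.congr_deriv (Eq.symm ?_)
    push_cast
    ring
  have := heis_mono_aux hF (fun y _ => by nlinarith [Real.one_sub_sq_div_two_le_cos (x := y)]) hx
  simp at this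
  linarith

private lemma heis_cos_upper {x : ℝ} (hx : 0 ≤ x) : Real.cos x ≤ 1 - x ^ 2 / 2 + x ^ 4 / 24 := by
  have hF : ∀ y : ℝ, HasDerivAt (fun y => 1 - y ^ 2 / 2 + y ^ 4 / 24 - Real.cos y)
      (-(y - y ^ 3 / 6) + Real.sin y) y := by
    intro y
    have h1 := (((hasDerivAt_const y (1:ℝ)).sub ((hasDerivAt_pow 2 y).div_const 2)).add
      ((hasDerivAt_pow 4 y).div_const 24)).sub (Real.hasDerivAt_cos y)
    refine h1.congr_deriv (Eq.symm ?_)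
    push_cast
    ring
  have := heis_mono_aux hF (fun y hy => by linarith [heis_sin_lower hy.le]) hx
  simp at this
  linarith

private lemma heis_sin_upper {x : ℝ} (hx : 0 ≤ x) : Real.sin x ≤ x - x ^ 3 / 6 + x ^ 5 / 120 := by
  have hF : ∀ y : ℝ, HasDerivAt (fun y => y - y ^ 3 / 6 + y ^ 5 / 120 - Real.sin y)
      ((1 - y ^ 2 / 2 + y ^ 4 / 24) - Real.cos y) y := by
    intro y
    have h1 := (((hasDerivAt_id y).sub ((hasDerivAt_pow 3 y).div_const 6)).add
      ((hasDerivAt_pow 5 y).div_const 120)).sub (Real.hasDerivAt_sin y)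
    refine h1.congr_deriv (Eq.symm ?_)
    push_cast
    ring
  have := heis_mono_aux hF (fun y hy => by linarith [heis_cos_upper hy.le]) hx
  simp at this
  linarith

private noncomputable def heisNu (φ : ℝ) : ℝ := (φ - Real.sin φ * Real.cos φ) / Real.sin φ ^ 2

private noncomputable def heisNuD (φ : ℝ) : ℝ :=
  2 * (Real.sin φ - φ * Real.cos φ) / Real.sin φ ^ 3

private lemma heis_sin_sub_mul_cos_pos {φ : ℝ} (h : φ ∈ Set.Ioo 0 π) :
    0 < Real.sin φ - φ * Real.cos φ := by
  have key : StrictMonoOn (fun y => Real.sin y - y * Real.cos y) (Set.Icc 0 π) := by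
    apply strictMonoOn_of_deriv_pos (convex_Icc 0 π)
    · fun_prop
    · intro y hy
      rw [interior_Icc] at hy
      have h1 : HasDerivAt (fun y => Real.sin y - y * Real.cos y) (y * Real.sin y) y := by
        have := (Real.hasDerivAt_sin y).sub ((hasDerivAt_id y).mul (Real.hasDerivAt_cos y))
        refine this.congr_deriv (Eq.symm ?_)
        simp
      rw [h1.deriv]
      exact mul_pos hy.1 (Real.sin_pos_of_pos_of_lt_pi hy.1 hy.2)
  have h0 : (0:ℝ) ∈ Set.Icc 0 π := Set.left_mem_Icc.2 Real.pi_pos.le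
  have hφ : φ ∈ Set.Icc 0 π := ⟨h.1.le, h.2.le⟩
  have := key h0 hφ h.1
  simpa using this

private lemma heisNu_num_pos {φ : ℝ} (h : φ ∈ Set.Ioo 0 π) :
    0 < φ - Real.sin φ * Real.cos φ := by
  have hs := Real.sin_pos_of_pos_of_lt_pi h.1 h.2
  rcases le_or_gt (Real.cos φ) 0 with hc | hc
  · have : Real.sin φ * Real.cos φ ≤ 0 := mul_nonpos_of_nonneg_of_nonpos hs.le hc
    linarith [h.1]
  · have h1 := Real.sin_lt h.1
    nlinarith [Real.cos_le_one φ]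

private lemma heisNu_pos {φ : ℝ} (h : φ ∈ Set.Ioo 0 π) : 0 < heisNu φ := by
  have hs := Real.sin_pos_of_pos_of_lt_pi h.1 h.2
  exact div_pos (heisNu_num_pos h) (by positivity)

private lemma heisNuD_pos {φ : ℝ} (h : φ ∈ Set.Ioo 0 π) : 0 < heisNuD φ := by
  have hs := Real.sin_pos_of_pos_of_lt_pi h.1 h.2
  exact div_pos (by linarith [heis_sin_sub_mul_cos_pos h]) (by positivity)

private lemma heisNu_hasDerivAt {φ : ℝ} (h : φ ∈ Set.Ioo 0 π) :
    HasDerivAt heisNu (heisNuD φ) φ := by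
  have hs := Real.sin_pos_of_pos_of_lt_pi h.1 h.2
  have h1 : HasDerivAt (fun y => y - Real.sin y * Real.cos y)
      (1 - (Real.cos φ * Real.cos φ + Real.sin φ * -Real.sin φ)) φ :=
    (hasDerivAt_id φ).sub ((Real.hasDerivAt_sin φ).mul (Real.hasDerivAt_cos φ))
  have h2 : HasDerivAt (fun y => Real.sin y ^ 2) (2 * Real.sin φ * Real.cos φ) φ := by
    have := (Real.hasDerivAt_sin φ).pow 2
    exact this.congr_deriv (by simp)
  have h3 := h1.div h2 (by positivity)
  have : heisNu = fun y => (y - Real.sin y * Real.cos y) / Real.sin y ^ 2 := rfl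
  rw [this]
  refine h3.congr_deriv (Eq.symm ?_)
  have hpy := Real.sin_sq_add_cos_sq φ
  rw [heisNuD]
  rw [div_eq_div_iff (by positivity) (by positivity)]
  linear_combination (-Real.sin φ ^ 5) * hpy

private lemma heisNu_strictMono : StrictMonoOn heisNu (Set.Ioo 0 π) := by
  apply strictMonoOn_of_deriv_pos (convex_Ioo 0 π)
  · intro φ hφ
    exact (heisNu_hasDerivAt hφ).differentiableAt.continuousAt.continuousWithinAt
  · intro φ hφ
    rw [interior_Ioo] at hφ
    rw [(heisNu_hasDerivAt hφ).deriv]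
    exact heisNuD_pos hφ

private lemma heisNu_small {φ : ℝ} (h0 : 0 < φ) (h1 : φ ≤ 1) : heisNu φ ≤ φ := by
  have hπ : φ < π := lt_of_le_of_lt h1 (by linarith [Real.pi_gt_three])
  have hs := Real.sin_pos_of_pos_of_lt_pi h0 hπ
  have hnum : φ - Real.sin φ * Real.cos φ ≤ 2 / 3 * φ ^ 3 := by
    have h2 : Real.sin (2 * φ) ≥ 2 * φ - (2 * φ) ^ 3 / 6 := heis_sin_lower (by linarith)
    have h3 : Real.sin φ * Real.cos φ = Real.sin (2 * φ) / 2 := by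
      rw [Real.sin_two_mul]; ring
    rw [h3]
    nlinarith
  have hden : (5 / 6 * φ) ^ 2 ≤ Real.sin φ ^ 2 := by
    have h4 : 5 / 6 * φ ≤ Real.sin φ := by
      nlinarith [heis_sin_lower h0.le, mul_nonneg (mul_nonneg h0.le
        (by linarith : (0:ℝ) ≤ 1 - φ)) (by linarith : (0:ℝ) ≤ 1 + φ)]
    have h5 : (0:ℝ) ≤ 5 / 6 * φ := by linarith
    nlinarith
  have hnn : 0 < φ - Real.sin φ * Real.cos φ := heisNu_num_pos ⟨h0, hπ⟩
  have : heisNu φ ≤ (2 / 3 * φ ^ 3) / ((5 / 6 * φ) ^ 2) := by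
    apply div_le_div₀ (by positivity) hnum (by positivity) hden
  calc heisNu φ ≤ (2 / 3 * φ ^ 3) / ((5 / 6 * φ) ^ 2) := this
    _ ≤ φ := by rw [div_le_iff₀ (by positivity)]; nlinarith

private lemma heisNu_large {u : ℝ} (hu : 0 < u) :
    ∃ b ∈ Set.Ioo 0 π, 2 ≤ b ∧ u < heisNu b := by
  have hπ3 : (3:ℝ) < π := Real.pi_gt_three
  set δ : ℝ := min 1 (1 / (u + 1)) with hδdef
  have hδ0 : 0 < δ := lt_min one_pos (by positivity)
  have hδ1 : δ ≤ 1 := min_le_left _ _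
  have hδu : δ ≤ 1 / (u + 1) := min_le_right _ _
  set b : ℝ := π - δ with hbdef
  have hb : b ∈ Set.Ioo 0 π := ⟨by linarith, by linarith⟩
  have hb2 : 2 ≤ b := by linarith
  refine ⟨b, hb, hb2, ?_⟩
  have hsb : 0 < Real.sin b := Real.sin_pos_of_pos_of_lt_pi hb.1 hb.2
  have hcb : Real.cos b ≤ 0 := Real.cos_nonpos_of_pi_div_two_le_of_le (by linarith) (by linarith)
  have hnum : 2 ≤ b - Real.sin b * Real.cos b := by
    nlinarith [mul_nonpos_of_nonneg_of_nonpos hsb.le hcb]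
  have hsin : Real.sin b ≤ δ := by
    have : Real.sin b = Real.sin δ := by rw [hbdef, Real.sin_pi_sub]
    rw [this]
    linarith [Real.sin_lt hδ0]
  have hden : Real.sin b ^ 2 ≤ δ ^ 2 := by nlinarith
  have key : 2 / δ ^ 2 ≤ heisNu b := div_le_div₀ (by linarith) hnum (by positivity) hden
  have : u < 2 / δ ^ 2 := by
    rw [lt_div_iff₀ (by positivity)]
    have h6 : u * δ ^ 2 ≤ u * (1 / (u + 1)) ^ 2 :=
      mul_le_mul_of_nonneg_left (by nlinarith) hu.le
    have h7 : u * (1 / (u + 1)) ^ 2 < 2 := by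
      rw [div_pow, one_pow, mul_one_div, div_lt_iff₀ (by positivity)]
      nlinarith [sq_nonneg u]
    linarith
  linarith

private lemma heisNu_surjOn {u : ℝ} (hu : 0 < u) : ∃ φ ∈ Set.Ioo 0 π, heisNu φ = u := by
  have hπ3 : (3:ℝ) < π := Real.pi_gt_three
  set a : ℝ := min 1 (u / 2) with hadef
  have ha0 : 0 < a := lt_min one_pos (by positivity)
  have ha1 : a ≤ 1 := min_le_left _ _
  have hau : heisNu a < u := by
    have := heisNu_small ha0 ha1
    have h2 : a ≤ u / 2 := min_le_right _ _
    linarith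
  obtain ⟨b, hb, hb2, hub⟩ := heisNu_large hu
  have hab : a ≤ b := by linarith
  have hcont : ContinuousOn heisNu (Set.Icc a b) := by
    apply ContinuousOn.div
    · fun_prop
    · fun_prop
    · intro x hx
      have hs : 0 < Real.sin x :=
        Real.sin_pos_of_pos_of_lt_pi (lt_of_lt_of_le ha0 hx.1) (lt_of_le_of_lt hx.2 hb.2)
      positivity
  have hmem : u ∈ Set.Icc (heisNu a) (heisNu b) := ⟨hau.le, hub.le⟩
  obtain ⟨φ, hφab, hφu⟩ := intermediate_value_Icc hab hcont hmem
  exact ⟨φ, ⟨lt_of_lt_of_le ha0 hφab.1, lt_of_le_of_lt hφab.2 hb.2⟩, hφu⟩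

open Classical in
private noncomputable def heisPhi (u : ℝ) : ℝ :=
  if h : ∃ φ ∈ Set.Ioo (0:ℝ) π, heisNu φ = u then h.choose else 1

private lemma heisPhi_spec {u : ℝ} (hu : 0 < u) :
    heisPhi u ∈ Set.Ioo 0 π ∧ heisNu (heisPhi u) = u := by
  have h := heisNu_surjOn hu
  rw [heisPhi, dif_pos h]
  exact ⟨h.choose_spec.1, h.choose_spec.2⟩

private lemma heisPhi_unique {u φ : ℝ} (hu : 0 < u) (hφ : φ ∈ Set.Ioo 0 π)
    (h : heisNu φ = u) : heisPhi u = φ := by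
  obtain ⟨hmem, heq⟩ := heisPhi_spec hu
  exact heisNu_strictMono.injOn hmem hφ (by rw [heq, h])

private lemma heisPhi_continuousAt {u : ℝ} (hu : 0 < u) : ContinuousAt heisPhi u := by
  obtain ⟨hmem, heq⟩ := heisPhi_spec hu
  rw [Metric.continuousAt_iff]
  intro ε hε
  set φ0 := heisPhi u with hφ0def
  set ε' : ℝ := min (min (φ0 / 2) ((π - φ0) / 2)) ε with hε'def
  have hε'0 : 0 < ε' := lt_min (lt_min (by linarith [hmem.1]) (by linarith [hmem.2])) hε
  have hε'1 : ε' ≤ φ0 / 2 := le_trans (min_le_left _ _) (min_le_left _ _)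
  have hε'2 : ε' ≤ (π - φ0) / 2 := le_trans (min_le_left _ _) (min_le_right _ _)
  have hε'3 : ε' ≤ ε := min_le_right _ _
  have hlo : φ0 - ε' ∈ Set.Ioo 0 π := ⟨by linarith, by linarith [hmem.2]⟩
  have hhi : φ0 + ε' ∈ Set.Ioo 0 π := ⟨by linarith [hmem.1], by linarith⟩
  have hα : heisNu (φ0 - ε') < u := by
    have := heisNu_strictMono hlo hmem (by linarith)
    rwa [heq] at this
  have hβ : u < heisNu (φ0 + ε') := by
    have := heisNu_strictMono hmem hhi (by linarith)
    rwa [heq] at this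
  refine ⟨min (u - heisNu (φ0 - ε')) (heisNu (φ0 + ε') - u),
    lt_min (by linarith) (by linarith), ?_⟩
  intro v hv
  rw [Real.dist_eq, abs_sub_lt_iff] at hv
  obtain ⟨hv1', hv2'⟩ := hv
  have hv1 : heisNu (φ0 - ε') < v := by
    have := min_le_left (u - heisNu (φ0 - ε')) (heisNu (φ0 + ε') - u)
    linarith
  have hv2 : v < heisNu (φ0 + ε') := by
    have := min_le_right (u - heisNu (φ0 - ε')) (heisNu (φ0 + ε') - u)
    linarith
  have hv0 : 0 < v := lt_trans (heisNu_pos hlo) hv1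
  obtain ⟨hvmem, hveq⟩ := heisPhi_spec hv0
  have h1 : φ0 - ε' < heisPhi v := by
    by_contra hc
    push_neg at hc
    have := heisNu_strictMono.monotoneOn hvmem hlo hc
    rw [hveq] at this
    linarith
  have h2 : heisPhi v < φ0 + ε' := by
    by_contra hc
    push_neg at hc
    have := heisNu_strictMono.monotoneOn hhi hvmem hc
    rw [hveq] at this
    linarith
  rw [Real.dist_eq, abs_sub_lt_iff]
  constructor <;> linarith

private lemma heisPhi_hasDerivAt {u : ℝ} (hu : 0 < u) :
    HasDerivAt heisPhi (heisNuD (heisPhi u))⁻¹ u := by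
  apply HasDerivAt.of_local_left_inverse (heisPhi_continuousAt hu)
    (heisNu_hasDerivAt (heisPhi_spec hu).1) (ne_of_gt (heisNuD_pos (heisPhi_spec hu).1))
  filter_upwards [eventually_gt_nhds hu] with v hv
  exact (heisPhi_spec hv).2

set_option maxHeartbeats 2000000 in
private lemma heisF_nonpos {φ : ℝ} (h : φ ∈ Set.Ioo 0 π) :
    φ ^ 2 * Real.sin φ ^ 2 - φ ^ 2 * Real.cos φ ^ 2 + 7 * φ * Real.sin φ * Real.cos φ
      - 6 * Real.sin φ ^ 2 ≤ 0 := by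
  obtain ⟨h0, hπ⟩ := h
  have hπ315 : π < 3.15 := Real.pi_lt_d2
  have hπ3 : (3:ℝ) < π := Real.pi_gt_three
  set s := Real.sin φ with hsdef
  set c := Real.cos φ with hcdef
  have hs0 : 0 ≤ s := Real.sin_nonneg_of_nonneg_of_le_pi h0.le hπ.le
  have hpy : s ^ 2 + c ^ 2 = 1 := Real.sin_sq_add_cos_sq φ
  rcases le_or_gt φ 1.4 with h14 | h14
  · -- Taylor zone
    have hslo : φ - φ ^ 3 / 6 ≤ s := heis_sin_lower h0.le
    have hsup : s ≤ φ - φ ^ 3 / 6 + φ ^ 5 / 120 := heis_sin_upper h0.le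
    have hclo : 1 - φ ^ 2 / 2 ≤ c := Real.one_sub_sq_div_two_le_cos
    have hcup : c ≤ 1 - φ ^ 2 / 2 + φ ^ 4 / 24 := heis_cos_upper h0.le
    have hc0 : 0 ≤ c := by nlinarith
    have hSpp0 : 0 ≤ φ - φ ^ 3 / 6 + φ ^ 5 / 120 := le_trans hs0 hsup
    have hCm0 : 0 ≤ 1 - φ ^ 2 / 2 := by nlinarith
    have hSm0 : 0 ≤ φ - φ ^ 3 / 6 := by nlinarith
    have ht1 : φ ^ 2 * s ^ 2 ≤ φ ^ 2 * (φ - φ ^ 3 / 6 + φ ^ 5 / 120) ^ 2 :=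
      mul_le_mul_of_nonneg_left (pow_le_pow_left₀ hs0 hsup 2) (sq_nonneg φ)
    have ht2 : φ ^ 2 * (1 - φ ^ 2 / 2) ^ 2 ≤ φ ^ 2 * c ^ 2 :=
      mul_le_mul_of_nonneg_left (pow_le_pow_left₀ hCm0 hclo 2) (sq_nonneg φ)
    have ht3 : 7 * φ * s * c ≤ 7 * φ * ((φ - φ ^ 3 / 6 + φ ^ 5 / 120) * (1 - φ ^ 2 / 2 + φ ^ 4 / 24)) := by
      have hsc : s * c ≤ (φ - φ ^ 3 / 6 + φ ^ 5 / 120) * (1 - φ ^ 2 / 2 + φ ^ 4 / 24) :=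
        mul_le_mul hsup hcup hc0 hSpp0
      nlinarith
    have ht4 : 6 * (φ - φ ^ 3 / 6) ^ 2 ≤ 6 * s ^ 2 :=
      mul_le_mul_of_nonneg_left (pow_le_pow_left₀ hSm0 hslo 2) (by norm_num)
    nlinarith [sq_nonneg φ, sq_nonneg (φ^2), pow_pos h0 2, pow_pos h0 4, sq_nonneg (φ^3),
      mul_pos (pow_pos h0 4) (pow_pos h0 2)]
  rcases le_or_gt φ (π / 2) with hhalf | hhalf
  · -- middle zone [1.4, π/2]
    have hsmono : Real.sin (7/5) ≤ s :=
      Real.sin_le_sin_of_le_of_le_pi_div_two (by linarith) hhalf (by linarith)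
    have hcmono : c ≤ Real.cos (7/5) :=
      Real.cos_le_cos_of_nonneg_of_le_pi (by norm_num) hπ.le (by linarith)
    have hs14 : (707/750 : ℝ) ≤ Real.sin (7/5) := by
      have := heis_sin_lower (by norm_num : (0:ℝ) ≤ 7/5)
      norm_num at this ⊢
      linarith
    have hc14 : Real.cos (7/5) ≤ (2702/15000 : ℝ) + 1/100 := by
      have := heis_cos_upper (by norm_num : (0:ℝ) ≤ 7/5)
      norm_num at this ⊢
      linarith
    have hc0 : 0 ≤ c := Real.cos_nonneg_of_mem_Icc ⟨by linarith, hhalf⟩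
    have hs1 : s ≤ 1 := Real.sin_le_one φ
    have hs94 : (94/100:ℝ) ≤ s := by linarith
    have hc2 : c ≤ (2/10:ℝ) := by linarith
    have hφ16 : φ ≤ 8/5 := by linarith
    have e1 : φ ^ 2 * s ^ 2 ≤ (8/5:ℝ)^2 * 1 :=
      mul_le_mul (pow_le_pow_left₀ h0.le hφ16 2)
        (by nlinarith : s ^ 2 ≤ 1) (sq_nonneg s) (by norm_num)
    have e2a : s * c ≤ 1 * (2/10:ℝ) := mul_le_mul hs1 hc2 hc0 (by norm_num)
    have e2 : φ * (s * c) ≤ (8/5:ℝ) * (1 * (2/10)) :=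
      mul_le_mul hφ16 e2a (mul_nonneg hs0 hc0) (by norm_num)
    have e3 : (94/100:ℝ)^2 ≤ s^2 := pow_le_pow_left₀ (by norm_num) hs94 2
    nlinarith [mul_nonneg (sq_nonneg φ) (sq_nonneg c)]
  · -- zone [π/2, π)
    have hc0 : c ≤ 0 := Real.cos_nonpos_of_pi_div_two_le_of_le hhalf.le (by linarith)
    have hsc : 7 * φ * s * c ≤ 0 := by
      have := mul_nonpos_of_nonneg_of_nonpos hs0 hc0
      nlinarith
    rcases le_or_gt φ (Real.sqrt 6) with h6 | h6
    · have hφ6 : φ ^ 2 ≤ 6 := by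
        nlinarith [Real.sq_sqrt (by norm_num : (0:ℝ) ≤ 6), Real.sqrt_nonneg 6]
      nlinarith [sq_nonneg s, sq_nonneg c, sq_nonneg φ, mul_nonneg (sq_nonneg φ) (sq_nonneg c)]
    · have h34 : 3 * π / 4 ≤ φ := by
        have hsq : (3 * π / 4) ^ 2 ≤ 6 := by nlinarith
        nlinarith [Real.sq_sqrt (by norm_num : (0:ℝ) ≤ 6), Real.sqrt_nonneg 6,
          Real.pi_pos]
      have hcval : c ≤ Real.cos (3 * π / 4) := by
        apply Real.cos_le_cos_of_nonneg_of_le_pi (by positivity) hπ.le h34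
      have hcos34 : Real.cos (3 * π / 4) = -(Real.sqrt 2 / 2) := by
        rw [show 3 * π / 4 = π - π/4 by ring, Real.cos_pi_sub, Real.cos_pi_div_four]
      have hc2 : 1 / 2 ≤ c ^ 2 := by
        rw [hcos34] at hcval
        nlinarith [Real.sq_sqrt (by norm_num : (0:ℝ) ≤ 2), Real.sqrt_nonneg 2]
      have h1 : φ ^ 2 * s ^ 2 - φ ^ 2 * c ^ 2 ≤ 0 := by nlinarith [sq_nonneg φ]
      nlinarith [sq_nonneg s]

private lemma isOpen_heisOmega : IsOpen heisOmega := by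
  have h1 : IsOpen {p : ℝ × ℝ × ℝ | (p.1, p.2.1) ≠ (0, 0)} := by
    have : {p : ℝ × ℝ × ℝ | (p.1, p.2.1) ≠ (0, 0)}
        = (fun p : ℝ × ℝ × ℝ => (p.1, p.2.1)) ⁻¹' {((0:ℝ), (0:ℝ))}ᶜ := rfl
    rw [this]
    exact isOpen_compl_singleton.preimage (by fun_prop)
  have h2 : IsOpen {p : ℝ × ℝ × ℝ | 0 < p.2.2} := by
    have : {p : ℝ × ℝ × ℝ | 0 < p.2.2}
        = (fun p : ℝ × ℝ × ℝ => p.2.2) ⁻¹' Set.Ioi 0 := rfl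
    rw [this]
    exact isOpen_Ioi.preimage (by fun_prop)
  exact h1.inter h2

private noncomputable def hL (a b c : ℝ) : (ℝ × ℝ × ℝ) →L[ℝ] ℝ :=
  a • (ContinuousLinearMap.fst ℝ ℝ (ℝ × ℝ))
    + b • ((ContinuousLinearMap.fst ℝ ℝ ℝ).comp (ContinuousLinearMap.snd ℝ ℝ (ℝ × ℝ)))
    + c • ((ContinuousLinearMap.snd ℝ ℝ ℝ).comp (ContinuousLinearMap.snd ℝ ℝ (ℝ × ℝ)))

@[simp] private lemma hL_apply (a b c : ℝ) (v : ℝ × ℝ × ℝ) :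
    hL a b c v = a * v.1 + b * v.2.1 + c * v.2.2 := by
  simp [hL]

private lemma hasFDerivAt_x1 (q : ℝ × ℝ × ℝ) :
    HasFDerivAt (fun p : ℝ × ℝ × ℝ => p.1) (hL 1 0 0) q := by
  have h : hL 1 0 0 = ContinuousLinearMap.fst ℝ ℝ (ℝ × ℝ) :=
    ContinuousLinearMap.ext fun v => by simp
  rw [h]
  exact hasFDerivAt_fst

private lemma hasFDerivAt_x2 (q : ℝ × ℝ × ℝ) :
    HasFDerivAt (fun p : ℝ × ℝ × ℝ => p.2.1) (hL 0 1 0) q := by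
  have h : hL 0 1 0
      = (ContinuousLinearMap.fst ℝ ℝ ℝ).comp (ContinuousLinearMap.snd ℝ ℝ (ℝ × ℝ)) :=
    ContinuousLinearMap.ext fun v => by simp
  rw [h]
  exact hasFDerivAt_fst.comp q hasFDerivAt_snd

private lemma hasFDerivAt_x3 (q : ℝ × ℝ × ℝ) :
    HasFDerivAt (fun p : ℝ × ℝ × ℝ => p.2.2) (hL 0 0 1) q := by
  have h : hL 0 0 1
      = (ContinuousLinearMap.snd ℝ ℝ ℝ).comp (ContinuousLinearMap.snd ℝ ℝ (ℝ × ℝ)) :=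
    ContinuousLinearMap.ext fun v => by simp
  rw [h]
  exact hasFDerivAt_snd.comp q hasFDerivAt_snd

private noncomputable def hS (q : ℝ × ℝ × ℝ) : ℝ := q.1 ^ 2 + q.2.1 ^ 2

private lemma hS_pos {q : ℝ × ℝ × ℝ} (hq : q ∈ heisOmega) : 0 < hS q := by
  obtain ⟨h1, _⟩ := hq
  rcases eq_or_ne q.1 0 with hx | hx
  · rcases eq_or_ne q.2.1 0 with hy | hy
    · exact absurd (by rw [hx, hy]) h1
    · have : 0 < q.2.1 ^ 2 := by positivity
      have : 0 ≤ q.1 ^ 2 := sq_nonneg _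
      unfold hS; nlinarith
  · have : 0 < q.1 ^ 2 := by positivity
    have : 0 ≤ q.2.1 ^ 2 := sq_nonneg _
    unfold hS; nlinarith

private lemma hS_hasFDerivAt (q : ℝ × ℝ × ℝ) :
    HasFDerivAt hS (hL (2 * q.1) (2 * q.2.1) 0) q := by
  have h := ((hasFDerivAt_x1 q).mul (hasFDerivAt_x1 q)).add
    ((hasFDerivAt_x2 q).mul (hasFDerivAt_x2 q))
  have hfun : hS = fun p : ℝ × ℝ × ℝ => p.1 * p.1 + p.2.1 * p.2.1 := by
    funext p; simp [hS]; ring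
  rw [hfun]
  refine h.congr_fderiv (Eq.symm ?_)
  refine ContinuousLinearMap.ext fun v => ?_
  simp
  ring

private lemma hTau_pos {q : ℝ × ℝ × ℝ} (hq : q ∈ heisOmega) : 0 < q.2.2 / hS q :=
  div_pos hq.2 (hS_pos hq)

private lemma hTau_hasFDerivAt {q : ℝ × ℝ × ℝ} (hq : q ∈ heisOmega) :
    HasFDerivAt (fun p => p.2.2 / hS p)
      (hL (-(2 * q.1 * q.2.2) / hS q ^ 2) (-(2 * q.2.1 * q.2.2) / hS q ^ 2) (1 / hS q)) q := by
  have hS0 : hS q ≠ 0 := (hS_pos hq).ne'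
  have h1 : HasFDerivAt (fun p : ℝ × ℝ × ℝ => (hS p)⁻¹)
      ((-(hS q ^ 2)⁻¹) • hL (2 * q.1) (2 * q.2.1) 0) q :=
    (hasDerivAt_inv hS0).comp_hasFDerivAt q (hS_hasFDerivAt q)
  have h2 := (hasFDerivAt_x3 q).mul h1
  have hfun : (fun p : ℝ × ℝ × ℝ => p.2.2 / hS p)
      = fun p : ℝ × ℝ × ℝ => p.2.2 * (hS p)⁻¹ := by
    funext p; rw [div_eq_mul_inv]
  rw [hfun]
  refine h2.congr_fderiv (Eq.symm ?_)
  refine ContinuousLinearMap.ext fun v => ?_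
  simp
  field_simp
  ring

private noncomputable def hPsi (q : ℝ × ℝ × ℝ) : ℝ := heisPhi (q.2.2 / hS q)

private lemma hPsi_mem {q : ℝ × ℝ × ℝ} (hq : q ∈ heisOmega) : hPsi q ∈ Set.Ioo 0 π :=
  (heisPhi_spec (hTau_pos hq)).1

private lemma hPsi_eq {q : ℝ × ℝ × ℝ} (hq : q ∈ heisOmega) :
    heisNu (hPsi q) = q.2.2 / hS q :=
  (heisPhi_spec (hTau_pos hq)).2

private lemma hPsi_hasFDerivAt {q : ℝ × ℝ × ℝ} (hq : q ∈ heisOmega) :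
    HasFDerivAt hPsi (hL
      (-(q.1 * Real.sin (hPsi q) * (hPsi q - Real.sin (hPsi q) * Real.cos (hPsi q)))
        / (hS q * (Real.sin (hPsi q) - hPsi q * Real.cos (hPsi q))))
      (-(q.2.1 * Real.sin (hPsi q) * (hPsi q - Real.sin (hPsi q) * Real.cos (hPsi q)))
        / (hS q * (Real.sin (hPsi q) - hPsi q * Real.cos (hPsi q))))
      (Real.sin (hPsi q) ^ 3 / (2 * hS q * (Real.sin (hPsi q) - hPsi q * Real.cos (hPsi q))))) q := by
  have hu := hTau_pos hq
  have hmem := hPsi_mem hq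
  have hS0 : (0:ℝ) < hS q := hS_pos hq
  have hsφ : 0 < Real.sin (hPsi q) := Real.sin_pos_of_pos_of_lt_pi hmem.1 hmem.2
  have hE : 0 < Real.sin (hPsi q) - hPsi q * Real.cos (hPsi q) := heis_sin_sub_mul_cos_pos hmem
  have h := (heisPhi_hasDerivAt hu).comp_hasFDerivAt q (hTau_hasFDerivAt hq)
  have hcon : q.2.2 = hS q * (hPsi q - Real.sin (hPsi q) * Real.cos (hPsi q))
      / Real.sin (hPsi q) ^ 2 := by
    have h1 := hPsi_eq hq
    rw [heisNu] at h1
    field_simp at h1 ⊢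
    linarith
  have hraw : HasFDerivAt hPsi ((heisNuD (hPsi q))⁻¹ •
      hL (-(2 * q.1 * q.2.2) / hS q ^ 2) (-(2 * q.2.1 * q.2.2) / hS q ^ 2) (1 / hS q)) q := h
  convert hraw using 1
  refine ContinuousLinearMap.ext fun v => ?_
  simp only [ContinuousLinearMap.smul_apply, hL_apply, smul_eq_mul]
  rw [heisNuD, hcon]
  field_simp

private noncomputable def hR (q : ℝ × ℝ × ℝ) : ℝ :=
  hPsi q / Real.sin (hPsi q) * Real.sqrt (hS q)

private noncomputable def hW1 (q : ℝ × ℝ × ℝ) : ℝ :=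
  (q.1 * Real.cos (hPsi q) + q.2.1 * Real.sin (hPsi q)) / Real.sqrt (hS q)

private noncomputable def hW2 (q : ℝ × ℝ × ℝ) : ℝ :=
  (q.2.1 * Real.cos (hPsi q) - q.1 * Real.sin (hPsi q)) / Real.sqrt (hS q)

private lemma hsqrt_hasFDerivAt {q : ℝ × ℝ × ℝ} (hq : q ∈ heisOmega) :
    HasFDerivAt (fun p => Real.sqrt (hS p))
      (hL (q.1 / Real.sqrt (hS q)) (q.2.1 / Real.sqrt (hS q)) 0) q := by
  have hS0 : (0:ℝ) < hS q := hS_pos hq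
  have hρ : 0 < Real.sqrt (hS q) := Real.sqrt_pos.2 hS0
  have h := (Real.hasDerivAt_sqrt hS0.ne').comp_hasFDerivAt q (hS_hasFDerivAt q)
  refine h.congr_fderiv (Eq.symm ?_)
  refine ContinuousLinearMap.ext fun v => ?_
  simp only [ContinuousLinearMap.smul_apply, hL_apply, smul_eq_mul]
  field_simp
  ring

private lemma hR_hasFDerivAt {q : ℝ × ℝ × ℝ} (hq : q ∈ heisOmega) :
    HasFDerivAt hR (hL (q.1 * Real.cos (hPsi q) / Real.sqrt (hS q))
      (q.2.1 * Real.cos (hPsi q) / Real.sqrt (hS q))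
      (Real.sin (hPsi q) / (2 * Real.sqrt (hS q)))) q := by
  have hmem := hPsi_mem hq
  have hS0 : (0:ℝ) < hS q := hS_pos hq
  have hρ : 0 < Real.sqrt (hS q) := Real.sqrt_pos.2 hS0
  have hρ2 : Real.sqrt (hS q) ^ 2 = hS q := Real.sq_sqrt hS0.le
  have hsφ : 0 < Real.sin (hPsi q) := Real.sin_pos_of_pos_of_lt_pi hmem.1 hmem.2
  have hE : 0 < Real.sin (hPsi q) - hPsi q * Real.cos (hPsi q) := heis_sin_sub_mul_cos_pos hmem
  have hg : HasDerivAt (fun y => y / Real.sin y)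
      ((Real.sin (hPsi q) - hPsi q * Real.cos (hPsi q)) / Real.sin (hPsi q) ^ 2) (hPsi q) := by
    have := (hasDerivAt_id (hPsi q)).div (Real.hasDerivAt_sin (hPsi q)) hsφ.ne'
    refine this.congr_deriv (Eq.symm ?_)
    simp only [one_mul, id_eq]
  have h1 := hg.comp_hasFDerivAt q (hPsi_hasFDerivAt hq)
  have h2 := h1.mul (hsqrt_hasFDerivAt hq)
  have hfun : hR = fun p => (fun y => y / Real.sin y) (hPsi p) * Real.sqrt (hS p) := rfl
  rw [hfun]
  refine h2.congr_fderiv (Eq.symm ?_)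
  refine ContinuousLinearMap.ext fun v => ?_
  simp only [ContinuousLinearMap.smul_apply, ContinuousLinearMap.add_apply, hL_apply,
    smul_eq_mul, Function.comp_apply]
  set ρ := Real.sqrt (hS q) with hρdef
  rw [← hρ2]
  have hρ0 : ρ ≠ 0 := ne_of_gt hρ
  have hE1 : Real.sin (hPsi q) - Real.cos (hPsi q) * hPsi q ≠ 0 := by rw [mul_comm]; exact hE.ne'
  field_simp
  ring

private lemma hr_eq_hR {r φf : ℝ × ℝ × ℝ → ℝ}
    (hφ : ∀ p ∈ heisOmega, φf p ∈ Set.Ioo 0 π ∧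
      (φf p - Real.sin (φf p) * Real.cos (φf p)) / (Real.sin (φf p)) ^ 2
        = p.2.2 / (p.1 ^ 2 + p.2.1 ^ 2))
    (hr : ∀ p ∈ heisOmega,
      r p = (φf p / Real.sin (φf p)) * Real.sqrt (p.1 ^ 2 + p.2.1 ^ 2)) :
    ∀ q ∈ heisOmega, r q = hR q := by
  intro q hq
  have hφq : heisPhi (q.2.2 / hS q) = φf q :=
    heisPhi_unique (hTau_pos hq) (hφ q hq).1 ((hφ q hq).2)
  rw [hr q hq, hR]
  have : hPsi q = φf q := hφq
  rw [this]
  rfl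

private lemma hXd1_eq {r φf : ℝ × ℝ × ℝ → ℝ}
    (hφ : ∀ p ∈ heisOmega, φf p ∈ Set.Ioo 0 π ∧
      (φf p - Real.sin (φf p) * Real.cos (φf p)) / (Real.sin (φf p)) ^ 2
        = p.2.2 / (p.1 ^ 2 + p.2.1 ^ 2))
    (hr : ∀ p ∈ heisOmega,
      r p = (φf p / Real.sin (φf p)) * Real.sqrt (p.1 ^ 2 + p.2.1 ^ 2)) :
    ∀ q ∈ heisOmega, heisXd1 r q = hW1 q ∧ heisXd2 r q = hW2 q := by
  intro q hq
  have hfd : fderiv ℝ r q = hL (q.1 * Real.cos (hPsi q) / Real.sqrt (hS q))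
      (q.2.1 * Real.cos (hPsi q) / Real.sqrt (hS q))
      (Real.sin (hPsi q) / (2 * Real.sqrt (hS q))) := by
    have hev : r =ᶠ[nhds q] hR :=
      Filter.eventuallyEq_of_mem (isOpen_heisOmega.mem_nhds hq) (hr_eq_hR hφ hr)
    rw [hev.fderiv_eq]
    exact (hR_hasFDerivAt hq).fderiv
  have hS0 : (0:ℝ) < hS q := hS_pos hq
  have hρ : 0 < Real.sqrt (hS q) := Real.sqrt_pos.2 hS0
  constructor
  · rw [heisXd1, hfd, hL_apply, hW1]
    field_simp
    ring
  · rw [heisXd2, hfd, hL_apply, hW2]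
    field_simp
    ring

private lemma hSecond {q : ℝ × ℝ × ℝ} (hq : q ∈ heisOmega) :
    fderiv ℝ hW1 q (1, 0, 2 * q.2.1) + fderiv ℝ hW2 q (0, 1, -2 * q.1)
      = (Real.cos (hPsi q) * Real.sin (hPsi q)
          + hPsi q * (Real.sin (hPsi q) ^ 2 - Real.cos (hPsi q) ^ 2))
        / (Real.sqrt (hS q) * (Real.sin (hPsi q) - hPsi q * Real.cos (hPsi q))) := by
  have hmem := hPsi_mem hq
  have hS0 : (0:ℝ) < hS q := hS_pos hq
  have hρ : 0 < Real.sqrt (hS q) := Real.sqrt_pos.2 hS0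
  have hρ2 : Real.sqrt (hS q) ^ 2 = hS q := Real.sq_sqrt hS0.le
  have hsφ : 0 < Real.sin (hPsi q) := Real.sin_pos_of_pos_of_lt_pi hmem.1 hmem.2
  have hE : 0 < Real.sin (hPsi q) - hPsi q * Real.cos (hPsi q) := heis_sin_sub_mul_cos_pos hmem
  have hInv : HasFDerivAt (fun p => (Real.sqrt (hS p))⁻¹)
      ((-(Real.sqrt (hS q) ^ 2)⁻¹) • hL (q.1 / Real.sqrt (hS q)) (q.2.1 / Real.sqrt (hS q)) 0) q :=
    (hasDerivAt_inv hρ.ne').comp_hasFDerivAt q (hsqrt_hasFDerivAt hq)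
  have hcos := (Real.hasDerivAt_cos (hPsi q)).comp_hasFDerivAt q (hPsi_hasFDerivAt hq)
  have hsin := (Real.hasDerivAt_sin (hPsi q)).comp_hasFDerivAt q (hPsi_hasFDerivAt hq)
  have hD1 := (((hasFDerivAt_x1 q).mul hcos).add ((hasFDerivAt_x2 q).mul hsin)).mul hInv
  have hD2 := (((hasFDerivAt_x2 q).mul hcos).sub ((hasFDerivAt_x1 q).mul hsin)).mul hInv
  rw [HasFDerivAt.fderiv (f := hW1) hD1, HasFDerivAt.fderiv (f := hW2) hD2]
  simp only [ContinuousLinearMap.add_apply, ContinuousLinearMap.sub_apply,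
    ContinuousLinearMap.smul_apply, ContinuousLinearMap.coe_smul', Pi.smul_apply,
    hL_apply, smul_eq_mul, Function.comp_apply, Pi.add_apply, Pi.sub_apply, Pi.mul_apply]
  set ψ := hPsi q with hψdef
  set ρ := Real.sqrt (hS q) with hρdef
  rw [← hρ2]
  have hSx : ρ ^ 2 = q.1 ^ 2 + q.2.1 ^ 2 := by rw [hρ2]; rfl
  have hρ0 : ρ ≠ 0 := ne_of_gt hρ
  have hs0 : Real.sin ψ ≠ 0 := ne_of_gt hsφ
  have hE0 : Real.sin ψ - ψ * Real.cos ψ ≠ 0 := ne_of_gt hE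
  have hE1 : Real.sin ψ - Real.cos ψ * ψ ≠ 0 := by rw [mul_comm]; exact hE0
  field_simp
  linear_combination (Real.cos ψ * Real.sin ψ - ψ * (Real.sin ψ ^ 2 + Real.cos ψ ^ 2)) * hSx

/-- CR sub-Laplacian comparison on `H¹`: on `Ω`, the Carnot–Carathéodory
distance `r = (φ/sin φ)‖x‖`, where `φ ∈ (0,π)` solves
`(φ − sin φ cos φ)/sin²φ = t/‖x‖²`, satisfies `½(X₁(X₁r) + X₂(X₂r)) ≤ 3/r`. -/
theorem heis_subLap_comparison (φf r : ℝ × ℝ × ℝ → ℝ)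
    (hφ : ∀ p ∈ heisOmega, φf p ∈ Set.Ioo 0 π ∧
      (φf p - Real.sin (φf p) * Real.cos (φf p)) / (Real.sin (φf p)) ^ 2
        = p.2.2 / (p.1 ^ 2 + p.2.1 ^ 2))
    (hr : ∀ p ∈ heisOmega,
      r p = (φf p / Real.sin (φf p)) * Real.sqrt (p.1 ^ 2 + p.2.1 ^ 2)) :
    ∀ p ∈ heisOmega,
      (heisXd1 (heisXd1 r) p + heisXd2 (heisXd2 r) p) / 2 ≤ 3 / r p := by
  intro p hp
  obtain ⟨hmem', hcon'⟩ := hφ p hp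
  have hφp : hPsi p = φf p := heisPhi_unique (hTau_pos hp) hmem' hcon'
  have hev1 : heisXd1 r =ᶠ[nhds p] hW1 :=
    Filter.eventuallyEq_of_mem (isOpen_heisOmega.mem_nhds hp)
      (fun q hq => (hXd1_eq hφ hr q hq).1)
  have hev2 : heisXd2 r =ᶠ[nhds p] hW2 :=
    Filter.eventuallyEq_of_mem (isOpen_heisOmega.mem_nhds hp)
      (fun q hq => (hXd1_eq hφ hr q hq).2)
  have h1 : heisXd1 (heisXd1 r) p = fderiv ℝ hW1 p (1, 0, 2 * p.2.1) := by
    rw [heisXd1, hev1.fderiv_eq]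
  have h2 : heisXd2 (heisXd2 r) p = fderiv ℝ hW2 p (0, 1, -2 * p.1) := by
    rw [heisXd2, hev2.fderiv_eq]
  rw [h1, h2, hSecond hp, hr p hp, ← hφp]
  have hSp : (p.1 ^ 2 + p.2.1 ^ 2) = hS p := rfl
  rw [hSp]
  have hmem := hPsi_mem hp
  have hS0 : (0:ℝ) < hS p := hS_pos hp
  have hρ : 0 < Real.sqrt (hS p) := Real.sqrt_pos.2 hS0
  have hsφ : 0 < Real.sin (hPsi p) := Real.sin_pos_of_pos_of_lt_pi hmem.1 hmem.2
  have hE : 0 < Real.sin (hPsi p) - hPsi p * Real.cos (hPsi p) := heis_sin_sub_mul_cos_pos hmem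
  set ψ := hPsi p with hψdef
  set ρ := Real.sqrt (hS p) with hρdef
  set s := Real.sin ψ with hsdef
  set c := Real.cos ψ with hcdef
  have hψ0 : 0 < ψ := hmem.1
  have key : ψ * (c * s) + ψ ^ 2 * s ^ 2 - ψ ^ 2 * c ^ 2 ≤ 6 * s ^ 2 - 6 * ψ * s * c := by
    have hF := heisF_nonpos hmem
    rw [← hsdef, ← hcdef] at hF
    linarith
  rw [div_div, div_le_div_iff₀ (by positivity) (by positivity)]
  have hEq : (c * s + ψ * (s ^ 2 - c ^ 2)) * (ψ / s * ρ)
      = (ψ * (c * s) + ψ ^ 2 * s ^ 2 - ψ ^ 2 * c ^ 2) * ρ / s := by ring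
  rw [hEq, div_le_iff₀ hsφ]
  nlinarith [mul_le_mul_of_nonneg_right key hρ.le]
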